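/- arXiv:2109.11417 — 9 statements merged into one kernel-verified Lean document; each statement's English description precedes it below -/
import Mathlib

section
/- Let T be a proper (s,n)-table in a normal form and let K(T) be the associated ideal. Then for any (i,j) with 0 ≤ i ≤ s and i < j ≤ n: α_{i,j} ≠ 0 if and only if m_{i,j} is a minimal generator of K(T) (i.e., m_{i,j} is not divisible by any other generator m_{p,q} with (p,q) ≠ (i,j)). -/
open MvPolynomial Finset

/-- An `(s,n)`-table: an `(s+1) × n` matrix of non-negative integers `α i j`
(rows `0..s`, columns `1..n`, with `d j := α 0 j`) satisfying the table axioms. -/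
def IsTable (s n : ℕ) (α : ℕ → ℕ → ℕ) : Prop :=
  s < n ∧
  (∀ i j, 1 ≤ i → i ≤ s → j < i → α i j = 0) ∧
  (∀ j, 1 ≤ j → j ≤ n → ∑ i ∈ Finset.Icc 1 s, α i j ≤ α 0 j) ∧
  (∀ k, 1 ≤ k → k ≤ s →
    α 0 k = ∑ i ∈ Finset.Icc 1 (k - 1), α i k + ∑ j ∈ Finset.Icc (k + 1) n, α k j
      + (if k + 1 ≤ s then α (k + 1) (k + 1) else 0))

/-- The generator `m_{i,j}` of `K(T)`, with columns `t` mapped to the variable `v t`: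
`m_{i,j} = x_1^{d_1-α_{1,1}} ⋯ x_i^{d_i-α_{1,i}-⋯-α_{i,i}} · x_j^{d_j-α_{1,j}-⋯-α_{i,j}}`. -/
noncomputable def mGenV (𝕜 : Type*) [Field 𝕜] (v : ℕ → ℕ) (α : ℕ → ℕ → ℕ) (i j : ℕ) :
    MvPolynomial ℕ 𝕜 :=
  (∏ t ∈ Finset.Icc 1 i, X (v t) ^ (α 0 t - ∑ r ∈ Finset.Icc 1 i, α r t)) *
    X (v j) ^ (α 0 j - ∑ r ∈ Finset.Icc 1 i, α r j)

/-- The generator `m_{i,j}` with the default variable order. -/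
noncomputable def mGen (𝕜 : Type*) [Field 𝕜] (α : ℕ → ℕ → ℕ) (i j : ℕ) :
    MvPolynomial ℕ 𝕜 :=
  mGenV 𝕜 id α i j

/-- The ideal `K(T)` associated to an `(s,n)`-table, generated by all `m_{i,j}`,
`0 ≤ i ≤ s`, `i < j ≤ n`, in `𝕜[x_1,…,x_n]` (viewed inside `MvPolynomial ℕ 𝕜`). -/
noncomputable def KIdeal (𝕜 : Type*) [Field 𝕜] (s n : ℕ) (α : ℕ → ℕ → ℕ) :
    Ideal (MvPolynomial ℕ 𝕜) :=
  Ideal.span {m | ∃ i j, i ≤ s ∧ i < j ∧ j ≤ n ∧ m = mGen 𝕜 α i j}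

/-- A table is in normal form: nonzero diagonal entries, no unconstrained almost-zero
columns, and strict column inequalities. -/
def NormalForm (s n : ℕ) (α : ℕ → ℕ → ℕ) : Prop :=
  (∀ i, 1 ≤ i → i ≤ s → α i i ≠ 0) ∧
  (1 ≤ s → ∀ j, s + 1 ≤ j → j ≤ n → ∃ i, 1 ≤ i ∧ i ≤ s ∧ α i j ≠ 0) ∧
  (∀ j, 1 ≤ j → j ≤ n → ∑ i ∈ Finset.Icc 1 s, α i j < α 0 j)

/-- exponent of column `t` at level `i`. -/
def exT (α : ℕ → ℕ → ℕ) (i t : ℕ) : ℕ := α 0 t - ∑ r ∈ Finset.Icc 1 i, α r t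

/-- exponent vector of `m_{i,j}`. -/
noncomputable def EV (α : ℕ → ℕ → ℕ) (i j : ℕ) : ℕ →₀ ℕ :=
  (∑ t ∈ Finset.Icc 1 i, Finsupp.single t (exT α i t)) + Finsupp.single j (exT α i j)

lemma EV_apply (α : ℕ → ℕ → ℕ) (i j v : ℕ) :
    EV α i j v = (if v ∈ Finset.Icc 1 i then exT α i v else 0)
      + (if v = j then exT α i j else 0) := by
  classical
  simp only [EV, Finsupp.add_apply, Finsupp.finset_sum_apply, Finsupp.single_apply]
  congr 1
  · rw [Finset.sum_ite_eq' (Finset.Icc 1 i) v (fun t => exT α i t)]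
  · simp [eq_comm]

lemma prod_monomial_one {𝕜 : Type*} [Field 𝕜] (S : Finset ℕ) (g : ℕ → ℕ →₀ ℕ) :
    (∏ t ∈ S, (monomial (g t) (1 : 𝕜))) = monomial (∑ t ∈ S, g t) 1 := by
  classical
  induction S using Finset.induction with
  | empty => simp
  | insert a S' h ih =>
    rw [Finset.prod_insert h, Finset.sum_insert h, ih, monomial_mul, one_mul]

lemma mGen_eq_monomial {𝕜 : Type*} [Field 𝕜] (α : ℕ → ℕ → ℕ) (i j : ℕ) :
    mGen 𝕜 α i j = monomial (EV α i j) 1 := by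
  simp only [mGen, mGenV, id_eq, X_pow_eq_monomial, EV]
  rw [prod_monomial_one, monomial_mul, one_mul]
  rfl

lemma mGen_dvd_iff {𝕜 : Type*} [Field 𝕜] (α : ℕ → ℕ → ℕ) (p q i j : ℕ) :
    mGen 𝕜 α p q ∣ mGen 𝕜 α i j ↔ EV α p q ≤ EV α i j := by
  rw [mGen_eq_monomial, mGen_eq_monomial, monomial_dvd_monomial]
  simp [one_ne_zero]

/-- for a proper table in normal form, `α_{i,j} ≠ 0` iff `m_{i,j}` is a
minimal generator of `K(T)` (not divisible by any other generator `m_{p,q}`). -/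
theorem stmt3 (𝕜 : Type*) [Field 𝕜] (s n : ℕ) (α : ℕ → ℕ → ℕ) (hT : IsTable s n α)
    (hproper : KIdeal 𝕜 s n α ≠ ⊤) (hNF : NormalForm s n α)
    (i j : ℕ) (hi : i ≤ s) (hij : i < j) (hjn : j ≤ n) :
    α i j ≠ 0 ↔
      ¬ ∃ p q, p ≤ s ∧ p < q ∧ q ≤ n ∧ (p, q) ≠ (i, j) ∧ mGen 𝕜 α p q ∣ mGen 𝕜 α i j := by
  obtain ⟨hsn, hzero, _, _⟩ := hT
  obtain ⟨hdiag, -, hstrict⟩ := hNF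
  -- partial column sums are strictly below the degree
  have hsum_lt : ∀ t i', 1 ≤ t → t ≤ n → i' ≤ s →
      ∑ r ∈ Finset.Icc 1 i', α r t < α 0 t := by
    intro t i' h1 h2 h3
    calc ∑ r ∈ Finset.Icc 1 i', α r t ≤ ∑ r ∈ Finset.Icc 1 s, α r t :=
          Finset.sum_le_sum_of_subset (Finset.Icc_subset_Icc_right h3)
      _ < α 0 t := hstrict t h1 h2
  have hpos : ∀ t i', 1 ≤ t → t ≤ n → i' ≤ s → 0 < exT α i' t := by
    intro t i' h1 h2 h3
    exact Nat.sub_pos_of_lt (hsum_lt t i' h1 h2 h3)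
  constructor
  · -- α i j ≠ 0 → no other generator divides
    rintro hne ⟨p, q, hps, hpq, hqn, hne2, hdvd⟩
    rw [mGen_dvd_iff] at hdvd
    have hle' : ∀ v, EV α p q v ≤ EV α i j v := fun v => hdvd v
    have hq1 : 1 ≤ q := by omega
    -- value of EV α p q at q
    have hEpq : EV α p q q = exT α p q := by
      rw [EV_apply, if_neg (by simp [Finset.mem_Icc]; omega), if_pos rfl, zero_add]
    have hqpos : 0 < EV α i j q := by
      have h := hpos q p hq1 hqn hps
      rw [← hEpq] at h
      exact h.trans_le (hle' q)
    -- hence q ∈ Icc 1 i or q = j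
    have hqcases : q ≤ i ∨ q = j := by
      by_contra hc
      push_neg at hc
      rw [EV_apply, if_neg (by simp [Finset.mem_Icc]; omega), if_neg hc.2] at hqpos
      omega
    rcases hqcases with hqi | hqj
    · -- q ≤ i : exponent of x_q in the divisor is too big
      have hEij : EV α i j q = exT α i q := by
        rw [EV_apply, if_pos (by simp [Finset.mem_Icc]; omega),
          if_neg (by omega), add_zero]
      have hsub : insert q (Finset.Icc 1 p) ⊆ Finset.Icc 1 i := by
        intro x hx
        simp only [Finset.mem_insert, Finset.mem_Icc] at hx ⊢
        omega
      have h1 : (∑ r ∈ Finset.Icc 1 p, α r q) + α q q ≤ ∑ r ∈ Finset.Icc 1 i, α r q := by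
        have h := Finset.sum_le_sum_of_subset (f := fun r => α r q) hsub
        beta_reduce at h
        rw [Finset.sum_insert (by simp [Finset.mem_Icc]; omega)] at h
        omega
      have h2 : ∑ r ∈ Finset.Icc 1 i, α r q < α 0 q := hsum_lt q i hq1 hqn hi
      have h3 : α q q ≠ 0 := hdiag q hq1 (by omega)
      have h4 : α 0 q - (∑ r ∈ Finset.Icc 1 p, α r q) ≤ α 0 q - ∑ r ∈ Finset.Icc 1 i, α r q := by
        have h := hle' q
        rw [hEpq, hEij] at h
        exact h
      omega
    · -- q = j
      subst hqj
      have hpi : p ≠ i := by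
        intro h; exact hne2 (by rw [h])
      rcases lt_or_gt_of_ne hpi with hpi' | hpi'
      · -- p < i : exponent of x_j in divisor too big since α i q ≠ 0
        have hEij : EV α i q q = exT α i q := by
          rw [EV_apply, if_neg (by simp [Finset.mem_Icc]; omega), if_pos rfl, zero_add]
        have hsub : insert i (Finset.Icc 1 p) ⊆ Finset.Icc 1 i := by
          intro x hx
          simp only [Finset.mem_insert, Finset.mem_Icc] at hx ⊢
          omega
        have h1 : (∑ r ∈ Finset.Icc 1 p, α r q) + α i q ≤ ∑ r ∈ Finset.Icc 1 i, α r q := by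
          have h := Finset.sum_le_sum_of_subset (f := fun r => α r q) hsub
          beta_reduce at h
          rw [Finset.sum_insert (by simp [Finset.mem_Icc]; omega)] at h
          omega
        have h2 : ∑ r ∈ Finset.Icc 1 i, α r q < α 0 q := hsum_lt q i hq1 hqn hi
        have h4 : α 0 q - (∑ r ∈ Finset.Icc 1 p, α r q) ≤ α 0 q - ∑ r ∈ Finset.Icc 1 i, α r q := by
          have h := hle' q
          rw [hEpq, hEij] at h
          exact h
        have h3 : α i q ≠ 0 := hne
        omega
      · -- p > i : divisor uses variable i+1 which is absent from m_{i,j}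
        have hv1 : i + 1 ∈ Finset.Icc 1 p := by simp [Finset.mem_Icc]; omega
        have hvne : i + 1 ≠ q := by omega
        have h4 := hle' (i + 1)
        rw [EV_apply, EV_apply, if_pos hv1, if_neg hvne, if_neg hvne,
          if_neg (by simp [Finset.mem_Icc])] at h4
        have := hpos (i + 1) p (by omega) (by omega) hps
        omega
  · intro hmin h0
    apply hmin
    -- i ≥ 1, else α 0 j = 0 contradicts strict inequality
    have hi1 : 1 ≤ i := by
      rcases Nat.eq_zero_or_pos i with h | h
      · exfalso
        have := hstrict j (by omega) hjn
        rw [h] at h0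
        omega
      · exact h
    have hsplit : ∀ t, ∑ r ∈ Finset.Icc 1 i, α r t
        = ∑ r ∈ Finset.Icc 1 (i - 1), α r t + α i t := by
      intro t
      have : Finset.Icc 1 i = insert i (Finset.Icc 1 (i - 1)) := by
        ext x; simp [Finset.mem_Icc]; omega
      rw [this, Finset.sum_insert (by simp [Finset.mem_Icc]; omega)]
      ring
    have key : ∀ t, α i t = 0 → exT α (i - 1) t = exT α i t := by
      intro t ht; unfold exT; rw [hsplit t, ht]; simp
    refine ⟨i - 1, j, by omega, by omega, hjn, by simp; omega, ?_⟩
    rw [mGen_dvd_iff]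
    intro v
    rw [EV_apply, EV_apply]
    by_cases h1 : v ∈ Finset.Icc 1 (i - 1)
    · have h2 : v ∈ Finset.Icc 1 i := by
        simp only [Finset.mem_Icc] at h1 ⊢; omega
      have h3 : v ≠ j := by simp only [Finset.mem_Icc] at h1; omega
      rw [if_pos h1, if_pos h2, if_neg h3, if_neg h3,
        key v (hzero i v hi1 hi (by simp only [Finset.mem_Icc] at h1; omega))]
    · rw [if_neg h1]
      by_cases h4 : v = j
      · rw [if_pos h4, if_pos h4, key j h0]
        simp
      · simp [h4]
end

section
/- Let T be a proper (s,n)-table in a normal form with s ≥ 1 colors. Then for every unconstrained variable index t with s+1 ≤ t ≤ n, there exists an i with 1 ≤ i ≤ s such that α_{i,t} ≠ 0 and such that the minimal generator m_{i,t} involves both x_1 and x_t; consequently, all of the variables x_1, ..., x_n lie in the same connected component of the simplicial complex S(K(T)). In other words, if T is a single proper table in normal form, then S(K(T)) is connected. -/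
open MvPolynomial Finset

/-- Two variable indices are adjacent if they both lie in the support
`{1,…,i} ∪ {j}` of a common minimal generator `m_{i,j}` (i.e. with `α_{i,j} ≠ 0`). -/
def TAdj (s n : ℕ) (α : ℕ → ℕ → ℕ) (a b : ℕ) : Prop :=
  ∃ i j, i ≤ s ∧ i < j ∧ j ≤ n ∧ α i j ≠ 0 ∧
    a ∈ insert j (Finset.Icc 1 i) ∧ b ∈ insert j (Finset.Icc 1 i)

/-- for a single proper table in normal form with `s ≥ 1`, every
unconstrained column `t` admits some `1 ≤ i ≤ s` with `α_{i,t} ≠ 0`, whose minimal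
generator `m_{i,t}` involves both `x_1` and `x_t`; consequently all the variables
`x_1, …, x_n` lie in one connected component, i.e. `S(K(T))` is connected. -/
theorem stmt7 (𝕜 : Type*) [Field 𝕜] (s n : ℕ) (α : ℕ → ℕ → ℕ) (hT : IsTable s n α)
    (hproper : KIdeal 𝕜 s n α ≠ ⊤) (hNF : NormalForm s n α) (hs : 1 ≤ s) :
    (∀ t, s + 1 ≤ t → t ≤ n → ∃ i, 1 ≤ i ∧ i ≤ s ∧ α i t ≠ 0 ∧
      1 ∈ insert t (Finset.Icc 1 i) ∧ t ∈ insert t (Finset.Icc 1 i)) ∧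
    (∀ a b, a ∈ Finset.Icc 1 n → b ∈ Finset.Icc 1 n →
      Relation.ReflTransGen (TAdj s n α) a b) := by
  obtain ⟨hsn, hzero, hle, hax⟩ := hT
  obtain ⟨hdiag, hcolnz, hstrict⟩ := hNF
  -- there is an unconstrained column j₀ with α s j₀ ≠ 0
  have hkey : ∃ j₀, s + 1 ≤ j₀ ∧ j₀ ≤ n ∧ α s j₀ ≠ 0 := by
    have hax_s := hax s hs le_rfl
    have hst := hstrict s hs (le_of_lt hsn)
    have hsplit : ∑ i ∈ Finset.Icc 1 s, α i s
        = ∑ i ∈ Finset.Icc 1 (s - 1), α i s + α s s := by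
      obtain ⟨b, rfl⟩ : ∃ b, s = b + 1 := ⟨s - 1, by omega⟩
      rw [Finset.sum_Icc_succ_top (by omega : 1 ≤ b + 1)]
      simp
    have hif : (if s + 1 ≤ s then α (s + 1) (s + 1) else 0) = 0 := by
      simp
    rw [hif, add_zero] at hax_s
    have hpos : 0 < ∑ j ∈ Finset.Icc (s + 1) n, α s j := by omega
    have hne : ∑ j ∈ Finset.Icc (s + 1) n, α s j ≠ 0 := hpos.ne'
    obtain ⟨j₀, hj₀mem, hj₀⟩ := Finset.exists_ne_zero_of_sum_ne_zero hne
    rw [Finset.mem_Icc] at hj₀mem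
    exact ⟨j₀, hj₀mem.1, hj₀mem.2, hj₀⟩
  obtain ⟨j₀, hj₀1, hj₀2, hj₀ne⟩ := hkey
  have part1 : ∀ t, s + 1 ≤ t → t ≤ n → ∃ i, 1 ≤ i ∧ i ≤ s ∧ α i t ≠ 0 ∧
      1 ∈ insert t (Finset.Icc 1 i) ∧ t ∈ insert t (Finset.Icc 1 i) := by
    intro t ht1 ht2
    obtain ⟨i, hi1, his, hine⟩ := hcolnz hs t ht1 ht2
    exact ⟨i, hi1, his, hine,
      Finset.mem_insert_of_mem (Finset.mem_Icc.mpr ⟨le_rfl, hi1⟩),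
      Finset.mem_insert_self _ _⟩
  refine ⟨part1, ?_⟩
  -- every vertex is adjacent to 1
  have hadj1 : ∀ a, a ∈ Finset.Icc 1 n → TAdj s n α a 1 := by
    intro a ha
    rw [Finset.mem_Icc] at ha
    by_cases hcase : a ≤ s
    · exact ⟨s, j₀, le_rfl, by omega, hj₀2, hj₀ne,
        Finset.mem_insert_of_mem (Finset.mem_Icc.mpr ⟨ha.1, hcase⟩),
        Finset.mem_insert_of_mem (Finset.mem_Icc.mpr ⟨le_rfl, hs⟩)⟩
    · obtain ⟨i, hi1, his, hine, h1mem, hamem⟩ := part1 a (by omega) ha.2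
      exact ⟨i, a, his, by omega, ha.2, hine, hamem, h1mem⟩
  intro a b ha hb
  have h1 : TAdj s n α a 1 := hadj1 a ha
  have h2 : TAdj s n α b 1 := hadj1 b hb
  have h2' : TAdj s n α 1 b := by
    obtain ⟨i, j, h₁, h₂, h₃, h₄, h₅, h₆⟩ := h2
    exact ⟨i, j, h₁, h₂, h₃, h₄, h₆, h₅⟩
  exact (Relation.ReflTransGen.single h1).tail h2'
end

section
/- Let T be a proper generalised table in a normal form with k connected components (i.e., a disjoint union of k single proper tables in normal form, where each (0,n)-table counts as n singleton tables). Then the weighted simplicial complex S(K(T)) has exactly k connected components. -/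
open MvPolynomial Finset

/-- A generalised table: a disjoint union of tables on disjoint sets of variables. -/
structure GenTable where
  num : ℕ
  s : Fin num → ℕ
  n : Fin num → ℕ
  α : Fin num → ℕ → ℕ → ℕ
  var : Fin num → ℕ → ℕ
  var_inj : ∀ c c' j j', 1 ≤ j → j ≤ n c → 1 ≤ j' → j' ≤ n c' →
    var c j = var c' j' → c = c' ∧ j = j'
  table : ∀ c, IsTable (s c) (n c) (α c)

/-- The ideal associated to a generalised table: the sum of the ideals of the
individual tables. -/
noncomputable def gKIdeal (𝕜 : Type*) [Field 𝕜] (T : GenTable) :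
    Ideal (MvPolynomial ℕ 𝕜) :=
  Ideal.span {m | ∃ c i j, i ≤ T.s c ∧ i < j ∧ j ≤ T.n c ∧
    m = mGenV 𝕜 (T.var c) (T.α c) i j}

/-- A generalised table is in normal form iff each individual table is. -/
def gNormal (T : GenTable) : Prop := ∀ c, NormalForm (T.s c) (T.n c) (T.α c)

/-- The vertex set of `S(K(T))` for a generalised table: the variables of `T`. -/
def gVertices (T : GenTable) : Set ℕ :=
  {v | ∃ c j, 1 ≤ j ∧ j ≤ T.n c ∧ v = T.var c j}

/-- Adjacency: two variables lie in the support of a common minimal generator. -/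
def gAdj (T : GenTable) (a b : ℕ) : Prop :=
  ∃ c i j, i ≤ T.s c ∧ i < j ∧ j ≤ T.n c ∧ T.α c i j ≠ 0 ∧
    (∃ p ∈ insert j (Finset.Icc 1 i), a = T.var c p) ∧
    (∃ q ∈ insert j (Finset.Icc 1 i), b = T.var c q)

lemma posBounds (T : GenTable) {c : Fin T.num} {i j p : ℕ}
    (hi : i ≤ T.s c) (hij : i < j) (hj : j ≤ T.n c)
    (hp : p ∈ insert j (Finset.Icc 1 i)) : 1 ≤ p ∧ p ≤ T.n c := by
  have hsn := (T.table c).1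
  simp only [Finset.mem_insert, Finset.mem_Icc] at hp
  omega

/-- The class of a vertex: for `s = 0` components, a single column; otherwise the
whole component. -/
def PClass (T : GenTable) (c : Fin T.num) (f x : ℕ) : Prop :=
  (T.s c = 0 ∧ x = T.var c f) ∨
  (T.s c ≠ 0 ∧ ∃ p, 1 ≤ p ∧ p ≤ T.n c ∧ x = T.var c p)

lemma PClass_adj (T : GenTable) {c : Fin T.num} {f a b : ℕ}
    (hf1 : 1 ≤ f) (hf2 : f ≤ T.n c)
    (hP : PClass T c f a) (hab : gAdj T a b) : PClass T c f b := by
  obtain ⟨c', i, j, hi, hij, hj, hα, ⟨p, hp, ha⟩, ⟨q, hq, hb⟩⟩ := hab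
  obtain ⟨hp1, hp2⟩ := posBounds T hi hij hj hp
  obtain ⟨hq1, hq2⟩ := posBounds T hi hij hj hq
  subst ha hb
  rcases hP with ⟨hs0, ha⟩ | ⟨hs, p0, h01, h02, ha⟩
  · obtain ⟨rfl, rfl⟩ := T.var_inj c' c p f hp1 hp2 hf1 hf2 ha
    simp only [Finset.mem_insert, Finset.mem_Icc] at hp hq
    have hq' : q = p := by omega
    exact Or.inl ⟨hs0, by rw [hq']⟩
  · obtain ⟨rfl, rfl⟩ := T.var_inj c' c p p0 hp1 hp2 h01 h02 ha
    exact Or.inr ⟨hs, q, hq1, hq2, rfl⟩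

lemma PClass_rtg (T : GenTable) {c : Fin T.num} {f a b : ℕ}
    (hf1 : 1 ≤ f) (hf2 : f ≤ T.n c)
    (hP : PClass T c f a) (h : Relation.ReflTransGen (gAdj T) a b) :
    PClass T c f b := by
  induction h with
  | refl => exact hP
  | tail _ hab ih => exact PClass_adj T hf1 hf2 ih hab

lemma connectTo (T : GenTable) (hNF : gNormal T) (c : Fin T.num) (hs : T.s c ≠ 0)
    {j : ℕ} (hj1 : 1 ≤ j) (hj2 : j ≤ T.n c) :
    Relation.ReflTransGen (gAdj T) (T.var c 1) (T.var c j) := by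
  obtain ⟨hsn, htri, hcol, hax⟩ := T.table c
  obtain ⟨hdiag, hfill, hstrict⟩ := hNF c
  by_cases hcase : j ≤ T.s c
  · have hax' := hax (T.s c) (by omega) le_rfl
    rw [if_neg (by omega)] at hax'
    have hstr := hstrict (T.s c) (by omega) (by omega)
    have hsplit : ∑ i ∈ Finset.Icc 1 (T.s c), T.α c i (T.s c)
        = ∑ i ∈ Finset.Icc 1 (T.s c - 1), T.α c i (T.s c)
          + T.α c (T.s c) (T.s c) := by
      have h1 : T.s c = (T.s c - 1) + 1 := by omega
      conv_lhs => rw [h1]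
      rw [Finset.sum_Icc_succ_top (by omega)]
      rw [← h1]
    have hR : ∑ j' ∈ Finset.Icc (T.s c + 1) (T.n c), T.α c (T.s c) j' ≠ 0 := by
      omega
    obtain ⟨j₀, hj₀mem, hj₀⟩ := Finset.exists_ne_zero_of_sum_ne_zero hR
    simp only [Finset.mem_Icc] at hj₀mem
    refine Relation.ReflTransGen.single
      ⟨c, T.s c, j₀, le_rfl, by omega, by omega, hj₀, ⟨1, ?_, rfl⟩, ⟨j, ?_, rfl⟩⟩
    · simp only [Finset.mem_insert, Finset.mem_Icc]; omega
    · simp only [Finset.mem_insert, Finset.mem_Icc]; omega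
  · obtain ⟨i, hi1, hi2, hαij⟩ := hfill (by omega) j (by omega) hj2
    refine Relation.ReflTransGen.single
      ⟨c, i, j, hi2, by omega, hj2, hαij, ⟨1, ?_, rfl⟩, ⟨j, Finset.mem_insert_self _ _, rfl⟩⟩
    simp only [Finset.mem_insert, Finset.mem_Icc]; omega

lemma sigma_mk_eq (T : GenTable) (c : Fin T.num)
    (f g : Fin (if T.s c = 0 then T.n c else 1)) (h : (f : ℕ) = (g : ℕ)) :
    (⟨c, f⟩ : (c : Fin T.num) × Fin (if T.s c = 0 then T.n c else 1)) = ⟨c, g⟩ := by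
  rw [show f = g from Fin.ext h]

/-- a proper generalised table in normal form with `k` connected
components (each `(0,n)`-table counting `n` times) yields a simplicial complex
`S(K(T))` with exactly `k` connected components: there are representatives
`rep : Fin k → ℕ` such that every vertex is connected to exactly one of them. -/
theorem stmt8 (𝕜 : Type*) [Field 𝕜] (T : GenTable)
    (hproper : gKIdeal 𝕜 T ≠ ⊤) (hNF : gNormal T) :
    ∃ rep : Fin (∑ c, if T.s c = 0 then T.n c else 1) → ℕ,
      (∀ m, rep m ∈ gVertices T) ∧
      ∀ v ∈ gVertices T, ∃! m, Relation.ReflTransGen (gAdj T) (rep m) v := by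
  classical
  set I := (c : Fin T.num) × Fin (if T.s c = 0 then T.n c else 1) with hI
  have e : I ≃ Fin (∑ c, if T.s c = 0 then T.n c else 1) :=
    Fintype.equivFinOfCardEq (by simp [hI])
  set col : I → ℕ := fun i => if T.s i.1 = 0 then (i.2 : ℕ) + 1 else 1 with hcoldef
  have hcol1 : ∀ i : I, 1 ≤ col i := fun i => by
    simp only [hcoldef]; split <;> omega
  have hcol2 : ∀ i : I, col i ≤ T.n i.1 := fun i => by
    have hlt := i.2.isLt
    have hsn := (T.table i.1).1
    simp only [hcoldef]
    split_ifs with h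
    · have hev : (if T.s i.1 = 0 then T.n i.1 else 1) = T.n i.1 := if_pos h
      omega
    · omega
  have hbase : ∀ i : I, PClass T i.1 (col i) (T.var i.1 (col i)) := fun i => by
    by_cases h : T.s i.1 = 0
    · exact Or.inl ⟨h, rfl⟩
    · exact Or.inr ⟨h, col i, hcol1 i, hcol2 i, rfl⟩
  refine ⟨fun m => T.var (e.symm m).1 (col (e.symm m)),
    fun m => ⟨(e.symm m).1, col (e.symm m), hcol1 _, hcol2 _, rfl⟩, ?_⟩
  rintro v ⟨c, j, hj1, hj2, rfl⟩
  have hjn := (T.table c).1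
  set i₀ : I := ⟨c, ⟨if T.s c = 0 then j - 1 else 0, by split_ifs <;> omega⟩⟩ with hi₀
  have hcoli₀ : col i₀ = if T.s c = 0 then j else 1 := by
    simp only [hcoldef, hi₀]
    split_ifs with h
    · omega
    · rfl
  have hpath : Relation.ReflTransGen (gAdj T) (T.var c (col i₀)) (T.var c j) := by
    rw [hcoli₀]
    by_cases h : T.s c = 0
    · rw [if_pos h]
    · rw [if_neg h]; exact connectTo T hNF c h hj1 hj2
  refine ⟨e i₀, ?_, ?_⟩
  · simp only [Equiv.symm_apply_apply]
    exact hpath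
  · intro m' hm'
    suffices h : e.symm m' = i₀ by
      have h2 := congrArg e h
      rwa [Equiv.apply_symm_apply] at h2
    have hres := PClass_rtg T (hcol1 (e.symm m')) (hcol2 (e.symm m'))
      (hbase (e.symm m')) hm'
    obtain ⟨c1, f1, hi'⟩ : ∃ c1 f1, e.symm m' = ⟨c1, f1⟩ :=
      ⟨(e.symm m').1, (e.symm m').2, rfl⟩
    rw [hi'] at hres ⊢
    rw [hi₀]
    rcases hres with ⟨hs0, heq⟩ | ⟨hsne, p, hp1, hp2, heq⟩
    · obtain ⟨rfl, hjc⟩ := T.var_inj c c1 j _ hj1 hj2 (hcol1 ⟨c1, f1⟩)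
        (hcol2 ⟨c1, f1⟩) heq
      have h1 : col ⟨c, f1⟩ = (f1 : ℕ) + 1 := by
        simp only [hcoldef]; exact if_pos hs0
      rw [h1] at hjc
      refine sigma_mk_eq T c _ _ ?_
      show (f1 : ℕ) = if T.s c = 0 then j - 1 else 0
      have h2 : (if T.s c = 0 then j - 1 else 0) = j - 1 := if_pos hs0
      omega
    · obtain ⟨rfl, -⟩ := T.var_inj c c1 j p hj1 hj2 hp1 hp2 heq
      have hlt := f1.isLt
      have hev : (if T.s c = 0 then T.n c else 1) = 1 := if_neg hsne
      refine sigma_mk_eq T c _ _ ?_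
      show (f1 : ℕ) = if T.s c = 0 then j - 1 else 0
      have h2 : (if T.s c = 0 then j - 1 else 0) = 0 := if_neg hsne
      omega
end

section
/- Let T be a proper (single) (s,n)-table in a normal form. Then the dimension of the simplicial complex S(K(T)) equals s, the number of colours of T. (Faces of S(K(T)) are supports of minimal generators and their subsets; dimension of a face with cardinality c is c−1, and the dimension of the complex is the maximal face dimension, so the claim is that the maximal support size among minimal generators equals s+1.) -/
open MvPolynomial Finset

/-- for a single proper table in normal form, the dimension of
`S(K(T))` is `s`: the maximal support cardinality among minimal generators
(supports `{1,…,i} ∪ {j}` for pairs with `α_{i,j} ≠ 0`) is exactly `s + 1`. -/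
theorem stmt9 (𝕜 : Type*) [Field 𝕜] (s n : ℕ) (α : ℕ → ℕ → ℕ) (hT : IsTable s n α)
    (hproper : KIdeal 𝕜 s n α ≠ ⊤) (hNF : NormalForm s n α) :
    (∃ i j, i ≤ s ∧ i < j ∧ j ≤ n ∧ α i j ≠ 0 ∧
      (insert j (Finset.Icc 1 i)).card = s + 1) ∧
    (∀ i j, i ≤ s → i < j → j ≤ n → α i j ≠ 0 →
      (insert j (Finset.Icc 1 i)).card ≤ s + 1) := by
  obtain ⟨hsn, hzero, hle, heq⟩ := hT
  obtain ⟨hdiag, hcol, hstrict⟩ := hNF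
  have hcard : ∀ i j : ℕ, i < j → (insert j (Finset.Icc 1 i)).card = i + 1 := by
    intro i j hij
    rw [Finset.card_insert_of_notMem (by simp; omega), Nat.card_Icc]
    omega
  constructor
  · rcases Nat.eq_zero_or_pos s with hs | hs
    · subst hs
      refine ⟨0, 1, le_rfl, one_pos, by omega, ?_, by rw [hcard 0 1 one_pos]⟩
      have := hstrict 1 le_rfl (by omega)
      simp at this
      omega
    · -- use the table equation at k = s and strictness at column s
      have hE := heq s hs le_rfl
      simp only [Nat.add_one_le_iff, lt_irrefl, if_false] at hE
      have hS := hstrict s hs (by omega)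
      have hsplit : ∑ i ∈ Finset.Icc 1 s, α i s
          = ∑ i ∈ Finset.Icc 1 (s - 1), α i s + α s s := by
        have : Finset.Icc 1 s = insert s (Finset.Icc 1 (s - 1)) := by
          ext x; simp; omega
        rw [this, Finset.sum_insert (by simp; omega)]
        ring
      have hpos : 0 < ∑ j ∈ Finset.Icc (s + 1) n, α s j := by omega
      obtain ⟨j, hj, hja⟩ := Finset.exists_ne_zero_of_sum_ne_zero (by omega :
        ∑ j ∈ Finset.Icc (s + 1) n, α s j ≠ 0)
      simp only [Finset.mem_Icc] at hj
      exact ⟨s, j, le_rfl, by omega, hj.2, hja, by rw [hcard s j (by omega)]⟩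
  · intro i j hi hij hjn hne
    rw [hcard i j hij]
    omega
end

section
/- Let K be a table ideal coming from a single proper table T in a normal form with connected S(K) of dimension s ≥ 1, and suppose two distinct variables x_i and x_j both belong to F(K) (the set of possible first variables) with the corresponding pure-power exponents d_i = d_j. Then T would split into a disjoint union (S(K) disconnected), a contradiction; hence the pure-power exponents of distinct elements of F(K) are pairwise distinct, and the unique variable in F(K) with the smallest pure-power exponent is the first constrained variable of any table in normal form representing K. -/
open MvPolynomial Finset

/-- `F(K)`: the set of variables `x_t` such that all minimal generators of `K(T)`
other than the pure powers have the same `x_t`-exponent. -/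
def FSet (𝕜 : Type*) [Field 𝕜] (s n : ℕ) (α : ℕ → ℕ → ℕ) : Set ℕ :=
  {t | 1 ≤ t ∧ t ≤ n ∧ ∃ e : ℕ, ∀ i j, 1 ≤ i → i ≤ s → i < j → j ≤ n → α i j ≠ 0 →
    MvPolynomial.degreeOf t (mGen 𝕜 α i j) = e}

/-! ### Auxiliary lemmas -/

lemma prod_X_pow_eq_mono (𝕜 : Type*) [Field 𝕜] (F : Finset ℕ) (f : ℕ → ℕ) :
    (∏ t ∈ F, (X t ^ f t : MvPolynomial ℕ 𝕜)) =
      monomial (∑ t ∈ F, Finsupp.single t (f t)) 1 := by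
  induction F using Finset.cons_induction with
  | empty => simp
  | cons a F ha ih =>
      rw [Finset.prod_cons, ih, X_pow_eq_monomial, monomial_mul, one_mul, Finset.sum_cons]

lemma degreeOf_mGen_aux (𝕜 : Type*) [Field 𝕜] (α : ℕ → ℕ → ℕ) (i j : ℕ) (t : ℕ) :
    degreeOf t (mGen 𝕜 α i j) =
      (if t ∈ Finset.Icc 1 i then α 0 t - ∑ r ∈ Finset.Icc 1 i, α r t else 0) +
      (if t = j then α 0 j - ∑ r ∈ Finset.Icc 1 i, α r j else 0) := by
  rw [mGen, mGenV]
  simp only [id]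
  rw [prod_X_pow_eq_mono, X_pow_eq_monomial, monomial_mul, mul_one,
    degreeOf_monomial_eq _ _ (one_ne_zero), Finsupp.add_apply, Finsupp.finset_sum_apply]
  congr 1
  · rw [Finset.sum_congr rfl (fun x _ => Finsupp.single_apply)]
    exact Finset.sum_ite_eq' _ _ _
  · rw [Finsupp.single_apply]
    by_cases h : t = j
    · simp [h]
    · simp [h, Ne.symm h]

lemma degreeOf_mGen_eq (𝕜 : Type*) [Field 𝕜] (α : ℕ → ℕ → ℕ) {i j : ℕ} (hij : i < j) (t : ℕ) :
    degreeOf t (mGen 𝕜 α i j) =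
      if (1 ≤ t ∧ t ≤ i) ∨ t = j then α 0 t - ∑ r ∈ Finset.Icc 1 i, α r t else 0 := by
  rw [degreeOf_mGen_aux]
  by_cases h1 : 1 ≤ t ∧ t ≤ i
  · rw [if_pos (Finset.mem_Icc.2 h1), if_neg (by omega), if_pos (Or.inl h1), add_zero]
  · rw [if_neg (fun hm => h1 (Finset.mem_Icc.1 hm))]
    by_cases h2 : t = j
    · rw [if_pos h2, if_pos (Or.inr h2), zero_add]
      subst h2; rfl
    · rw [if_neg h2, if_neg (by tauto)]

lemma trapped {s n : ℕ} {α : ℕ → ℕ → ℕ} {t : ℕ} (h : ∀ c, TAdj s n α t c → c = t) :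
    ∀ b, Relation.ReflTransGen (TAdj s n α) t b → b = t := by
  intro b hb
  induction hb with
  | refl => rfl
  | tail hab hbc ih => exact h _ (ih ▸ hbc)

lemma chain_lemma (𝕜 : Type*) [Field 𝕜] (s n : ℕ) (α : ℕ → ℕ → ℕ) (hT : IsTable s n α)
    (hNF : NormalForm s n α) (hs : 1 ≤ s)
    (hConn : ∀ a b, a ∈ Finset.Icc 1 n → b ∈ Finset.Icc 1 n →
      Relation.ReflTransGen (TAdj s n α) a b)
    {t : ℕ} (ht : t ∈ FSet 𝕜 s n α) (ht2 : 2 ≤ t) :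
    ∀ k, 1 ≤ k → k < t → α 0 k < α 0 (k + 1) := by
  obtain ⟨hsn, hlow, _hle, hrow⟩ := hT
  obtain ⟨hdiag, hunc, hcol⟩ := hNF
  obtain ⟨ht1, htn, e, he⟩ := ht
  -- partial column sums are below the pure power
  have hsub : ∀ i t', i ≤ s → 1 ≤ t' → t' ≤ n →
      ∑ r ∈ Finset.Icc 1 i, α r t' < α 0 t' := by
    intro i t' hi h1 h2
    exact lt_of_le_of_lt
      (Finset.sum_le_sum_of_subset (Finset.Icc_subset_Icc_right hi)) (hcol t' h1 h2)
  -- equal partial sums kill intermediate entries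
  have hgap : ∀ i₁ i₂ t' r, i₁ < r → r ≤ i₂ →
      (∑ x ∈ Finset.Icc 1 i₁, α x t') = (∑ x ∈ Finset.Icc 1 i₂, α x t') → α r t' = 0 := by
    intro i₁ i₂ t' r h1 h2 hsum
    have hss : insert r (Finset.Icc 1 i₁) ⊆ Finset.Icc 1 i₂ := by
      intro x hx
      simp only [Finset.mem_insert, Finset.mem_Icc] at hx ⊢
      omega
    have hnm : r ∉ Finset.Icc 1 i₁ := by simp [Finset.mem_Icc]; omega
    have h5 := Finset.sum_le_sum_of_subset (f := fun x => α x t') hss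
    rw [Finset.sum_insert hnm] at h5
    have h6 : ∑ x ∈ Finset.Icc 1 i₁, α x t' + α r t' ≤ ∑ x ∈ Finset.Icc 1 i₂, α x t' := by
      simpa [add_comm] using h5
    omega
  -- degreeOf value on a containing pair
  have hcont : ∀ i j, 1 ≤ i → i ≤ s → i < j → j ≤ n → α i j ≠ 0 → (t ≤ i ∨ t = j) →
      e = α 0 t - ∑ r ∈ Finset.Icc 1 i, α r t := by
    intro i j hi his hij hjn hα hc
    rw [← he i j hi his hij hjn hα, degreeOf_mGen_eq 𝕜 α hij, if_pos (by omega)]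
  -- there exists a pair containing t
  have hex : ∃ i j, 1 ≤ i ∧ i ≤ s ∧ i < j ∧ j ≤ n ∧ α i j ≠ 0 ∧ (t ≤ i ∨ t = j) := by
    by_contra hno
    push_neg at hno
    have hstep : ∀ c, TAdj s n α t c → c = t := by
      rintro c ⟨i, j, his, hij, hjn, hα, hat, hbt⟩
      rcases Nat.eq_zero_or_pos i with h0 | h1
      · subst h0
        rw [Finset.Icc_eq_empty (by omega)] at hat hbt
        simp only [Finset.mem_insert, Finset.notMem_empty, or_false] at hat hbt
        omega
      · exfalso
        obtain ⟨hc1, hc2⟩ := hno i j h1 his hij hjn hα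
        rcases Finset.mem_insert.1 hat with h | h
        · exact hc2 h
        · have := (Finset.mem_Icc.1 h).2; omega
    have := trapped hstep 1 (hConn t 1 (by simp [Finset.mem_Icc]; omega)
      (by simp [Finset.mem_Icc]; omega))
    omega
  -- e is positive
  have hepos : 1 ≤ e := by
    obtain ⟨i, j, hi, his, hij, hjn, hα, hc⟩ := hex
    have h1 := hcont i j hi his hij hjn hα hc
    have h2 := hsub i t his (by omega) htn
    omega
  -- every pair contains t
  have hP1 : ∀ i j, 1 ≤ i → i ≤ s → i < j → j ≤ n → α i j ≠ 0 → t ≤ i ∨ t = j := by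
    intro i j hi his hij hjn hα
    by_contra hc
    push_neg at hc
    have := he i j hi his hij hjn hα
    rw [degreeOf_mGen_eq 𝕜 α hij, if_neg (by omega)] at this
    omega
  rcases le_or_gt t s with hts | hts
  · -- Case t ≤ s : all rows below t vanish
    have hrowz : ∀ k j, 1 ≤ k → k < t → k < j → j ≤ n → α k j = 0 := by
      intro k j hk hkt hkj hjn
      by_contra hα
      have hks : k ≤ s := by omega
      have hjt : j = t := by
        rcases hP1 k j hk hks hkj hjn hα with h | h
        · omega
        · omega
      rw [hjt] at hα
      -- all pairs must then have j = t; contradict normal form at column s+1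
      have hallj : ∀ i' j', 1 ≤ i' → i' ≤ s → i' < j' → j' ≤ n → α i' j' ≠ 0 → j' = t := by
        intro i' j' h1 h2 h3 h4 h5
        rcases hP1 i' j' h1 h2 h3 h4 h5 with h | h
        · exfalso
          have e1 := hcont k t hk hks hkt htn hα (Or.inr rfl)
          have e2 := hcont i' j' h1 h2 h3 h4 h5 (Or.inl h)
          have s1 := hsub k t hks (by omega) htn
          have s2 := hsub i' t h2 (by omega) htn
          have hse : ∑ x ∈ Finset.Icc 1 k, α x t = ∑ x ∈ Finset.Icc 1 i', α x t := by omega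
          exact hdiag t (by omega) hts (hgap k i' t t (by omega) h hse)
        · omega
      obtain ⟨i', h1, h2, h5⟩ := hunc hs (s + 1) le_rfl (by omega)
      have := hallj i' (s + 1) h1 h2 (by omega) (by omega) h5
      omega
    intro k hk hkt
    have hrk := hrow k hk (by omega)
    have h1 : ∑ i ∈ Finset.Icc 1 (k - 1), α i k = 0 := by
      refine Finset.sum_eq_zero fun i hi => ?_
      rw [Finset.mem_Icc] at hi
      exact hrowz i k hi.1 (by omega) (by omega) (by omega)
    have h2 : ∑ j ∈ Finset.Icc (k + 1) n, α k j = 0 := by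
      refine Finset.sum_eq_zero fun j hj => ?_
      rw [Finset.mem_Icc] at hj
      exact hrowz k j hk hkt (by omega) hj.2
    rw [if_pos (by omega : k + 1 ≤ s), h1, h2] at hrk
    have hterm : α (k + 1) (k + 1) ≤ ∑ r ∈ Finset.Icc 1 s, α r (k + 1) :=
      Finset.single_le_sum (f := fun r => α r (k + 1)) (fun _ _ => Nat.zero_le _)
        (Finset.mem_Icc.2 (by omega))
    have := hcol (k + 1) (by omega) (by omega)
    omega
  · -- Case t > s : t = n = s + 1
    have hjt : ∀ i j, 1 ≤ i → i ≤ s → i < j → j ≤ n → α i j ≠ 0 → j = t := by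
      intro i j h1 h2 h3 h4 h5
      rcases hP1 i j h1 h2 h3 h4 h5 with h | h
      · omega
      · omega
    have hts1 : t = s + 1 := by
      obtain ⟨i', h1, h2, h5⟩ := hunc hs (s + 1) le_rfl (by omega)
      have := hjt i' (s + 1) h1 h2 (by omega) (by omega) h5
      omega
    have hn : n = s + 1 := by
      by_contra h
      obtain ⟨i', h1, h2, h5⟩ := hunc hs (s + 2) (by omega) (by omega)
      have := hjt i' (s + 2) h1 h2 (by omega) (by omega) h5
      omega
    have htn' : t = n := by omega
    -- at most one nonzero entry in column n
    have key : ∀ i₁ i₂, 1 ≤ i₁ → i₁ < i₂ → i₂ ≤ s → α i₁ n ≠ 0 → α i₂ n ≠ 0 → False := by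
      intro i₁ i₂ h1 h2 h3 h4 h5
      have e1 := hcont i₁ n h1 (by omega) (by omega) le_rfl h4 (Or.inr htn')
      have e2 := hcont i₂ n (by omega) h3 (by omega) le_rfl h5 (Or.inr htn')
      have s1 := hsub i₁ t (by omega) (by omega) htn
      have s2 := hsub i₂ t h3 (by omega) htn
      rw [← htn'] at h5
      have hse : ∑ x ∈ Finset.Icc 1 i₁, α x t = ∑ x ∈ Finset.Icc 1 i₂, α x t := by omega
      exact h5 (hgap i₁ i₂ t i₂ h2 le_rfl hse)
    obtain ⟨i₀, hi₀1, hi₀s, hi₀⟩ := hunc hs n (by omega) le_rfl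
    have hi₀eq : i₀ = s := by
      by_contra h
      have hi₀lt : i₀ < s := by omega
      have hs2 : 2 ≤ s := by omega
      have hstep : ∀ c, TAdj s n α s c → c = s := by
        rintro c ⟨i, j, his, hij, hjn, hα, hat, hbt⟩
        rcases Nat.eq_zero_or_pos i with h0 | h1
        · subst h0
          rw [Finset.Icc_eq_empty (by omega)] at hat hbt
          simp only [Finset.mem_insert, Finset.notMem_empty, or_false] at hat hbt
          omega
        · have hjn' : j = n := by rw [hjt i j h1 his hij hjn hα]; omega
          have hii : i = i₀ := by
            rw [hjn'] at hα
            rcases lt_trichotomy i i₀ with hlt | heq | hgt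
            · exact absurd (key i i₀ h1 hlt hi₀s hα hi₀) (fun h => h)
            · exact heq
            · exact absurd (key i₀ i hi₀1 hgt his hi₀ hα) (fun h => h)
          exfalso
          rcases Finset.mem_insert.1 hat with h' | h'
          · omega
          · rw [Finset.mem_Icc] at h'; omega
      have := trapped hstep 1 (hConn s 1 (by simp [Finset.mem_Icc]; omega)
        (by simp [Finset.mem_Icc]; omega))
      omega
    have hcolz : ∀ r, 1 ≤ r → r < s → α r n = 0 := by
      intro r h1 h2
      by_contra hα
      exact key r s h1 h2 le_rfl hα (hi₀eq ▸ hi₀)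
    have hoffz : ∀ i j, 1 ≤ i → i ≤ s → i < j → j < n → α i j = 0 := by
      intro i j h1 h2 h3 h4
      by_contra hα
      have := hjt i j h1 h2 h3 (by omega) hα
      omega
    intro k hk hkt
    rcases Nat.lt_or_ge k s with hks | hks
    · -- k < s
      have hrk := hrow k hk (by omega)
      have h1 : ∑ i ∈ Finset.Icc 1 (k - 1), α i k = 0 := by
        refine Finset.sum_eq_zero fun i hi => ?_
        rw [Finset.mem_Icc] at hi
        exact hoffz i k hi.1 (by omega) (by omega) (by omega)
      have h2 : ∑ j ∈ Finset.Icc (k + 1) n, α k j = 0 := by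
        refine Finset.sum_eq_zero fun j hj => ?_
        rw [Finset.mem_Icc] at hj
        rcases Nat.lt_or_ge j n with h | h
        · exact hoffz k j hk (by omega) (by omega) h
        · have : j = n := by omega
          rw [this]
          exact hcolz k hk hks
      rw [if_pos (by omega : k + 1 ≤ s), h1, h2] at hrk
      have hterm : α (k + 1) (k + 1) ≤ ∑ r ∈ Finset.Icc 1 s, α r (k + 1) :=
        Finset.single_le_sum (f := fun r => α r (k + 1)) (fun _ _ => Nat.zero_le _)
          (Finset.mem_Icc.2 (by omega))
      have := hcol (k + 1) (by omega) (by omega)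
      omega
    · -- k = s
      have hkeq : k = s := by omega
      have hrk := hrow k hk (by omega)
      have h1 : ∑ i ∈ Finset.Icc 1 (k - 1), α i k = 0 := by
        refine Finset.sum_eq_zero fun i hi => ?_
        rw [Finset.mem_Icc] at hi
        exact hoffz i k hi.1 (by omega) (by omega) (by omega)
      have h2 : ∑ j ∈ Finset.Icc (k + 1) n, α k j = α k n := by
        rw [hn, show k + 1 = s + 1 by omega, Finset.Icc_self, Finset.sum_singleton]
      rw [if_neg (by omega), h1, h2] at hrk
      have hterm : α k n ≤ ∑ r ∈ Finset.Icc 1 s, α r n :=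
        Finset.single_le_sum (f := fun r => α r n) (fun _ _ => Nat.zero_le _)
          (Finset.mem_Icc.2 (by omega))
      have := hcol n (by omega) le_rfl
      have hkn : k + 1 = n := by omega
      rw [hkn]
      omega

theorem stmt11 (𝕜 : Type*) [Field 𝕜] (s n : ℕ) (α : ℕ → ℕ → ℕ) (hT : IsTable s n α)
    (hproper : KIdeal 𝕜 s n α ≠ ⊤) (hNF : NormalForm s n α) (hs : 1 ≤ s)
    (hConn : ∀ a b, a ∈ Finset.Icc 1 n → b ∈ Finset.Icc 1 n →
      Relation.ReflTransGen (TAdj s n α) a b) :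
    (∀ t₁ ∈ FSet 𝕜 s n α, ∀ t₂ ∈ FSet 𝕜 s n α, t₁ ≠ t₂ → α 0 t₁ ≠ α 0 t₂) ∧
    1 ∈ FSet 𝕜 s n α ∧
    (∀ t ∈ FSet 𝕜 s n α, t ≠ 1 → α 0 1 < α 0 t) := by
  have mono : ∀ t ∈ FSet 𝕜 s n α, ∀ k, 1 ≤ k → k < t → α 0 k < α 0 t := by
    intro t ht k hk hkt
    have hchain := chain_lemma 𝕜 s n α hT hNF hs hConn ht (by omega)
    have haux : ∀ m, k + m < t → α 0 k < α 0 (k + m + 1) := by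
      intro m
      induction m with
      | zero => intro h; simpa using hchain k hk (by omega)
      | succ p ih =>
          intro h
          exact lt_trans (ih (by omega)) (hchain (k + p + 1) (by omega) (by omega))
    have := haux (t - k - 1) (by omega)
    rwa [show k + (t - k - 1) + 1 = t by omega] at this
  have h1F : 1 ∈ FSet 𝕜 s n α := by
    refine ⟨le_rfl, by have := hT.1; omega, α 0 1 - α 1 1, ?_⟩
    intro i j hi his hij hjn hα
    rw [degreeOf_mGen_eq 𝕜 α hij, if_pos (Or.inl ⟨le_rfl, hi⟩)]
    have : ∑ r ∈ Finset.Icc 1 i, α r 1 = α 1 1 := by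
      refine Finset.sum_eq_single_of_mem 1 (Finset.mem_Icc.2 ⟨le_rfl, hi⟩) fun r hr hne => ?_
      rw [Finset.mem_Icc] at hr
      exact hT.2.1 r 1 hr.1 (le_trans hr.2 his) (by omega)
    rw [this]
  refine ⟨?_, h1F, ?_⟩
  · intro t₁ h₁ t₂ h₂ hne
    rcases lt_or_gt_of_ne hne with h | h
    · exact (mono t₂ h₂ t₁ h₁.1 h).ne
    · exact (mono t₁ h₁ t₂ h₂.1 h).ne'
  · intro t ht htne
    exact mono t ht 1 le_rfl (by have := ht.1; omega)
end

section
/- Let T be a single (s,n)-table in normal form with the default order of constrained variables x_1,...,x_s, let K = K(T), and let J = K : (x_1^{d_1−α_{1,1}}) be the ideal quotient. Then J is generated by x_1^{α_{1,1}} together with the generators of a table ideal J' in the variables x_2,...,x_n, where J' = K(T') for the table T' obtained from T by deleting the first column and first row and replacing the new top row entries d_j by d_j − α_{1,j} (for j = 2,...,n). -/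
open MvPolynomial Finset

lemma sum_shift {M : Type*} [AddCommMonoid M] (g : ℕ → M) (a b : ℕ) :
    ∑ t ∈ Finset.Icc (a+1) (b+1), g t = ∑ t ∈ Finset.Icc a b, g (t+1) := by
  rw [← Finset.map_add_right_Icc a b 1, Finset.sum_map]
  rfl

lemma sum_Icc_one {M : Type*} [AddCommMonoid M] (g : ℕ → M) {i : ℕ} (hi : 1 ≤ i) :
    ∑ t ∈ Finset.Icc 1 i, g t = g 1 + ∑ t ∈ Finset.Icc 2 i, g t := by
  rw [show Finset.Icc 1 i = insert 1 (Finset.Icc 2 i) by ext x; simp; omega,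
    Finset.sum_insert (by simp)]

lemma prod_X_pow (𝕜 : Type*) [Field 𝕜] (v c : ℕ → ℕ) (s : Finset ℕ) :
    (∏ t ∈ s, (X (v t) : MvPolynomial ℕ 𝕜) ^ c t) =
      monomial (∑ t ∈ s, Finsupp.single (v t) (c t)) 1 := by
  induction s using Finset.induction_on with
  | empty => simp
  | insert _ _ h ih =>
      rw [Finset.prod_insert h, Finset.sum_insert h, ih, X_pow_eq_monomial, monomial_mul, one_mul]

noncomputable def expE (v : ℕ → ℕ) (α : ℕ → ℕ → ℕ) (i j : ℕ) : ℕ →₀ ℕ :=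
  (∑ t ∈ Finset.Icc 1 i, Finsupp.single (v t) (α 0 t - ∑ r ∈ Finset.Icc 1 i, α r t)) +
    Finsupp.single (v j) (α 0 j - ∑ r ∈ Finset.Icc 1 i, α r j)

lemma mGenV_eq (𝕜 : Type*) [Field 𝕜] (v : ℕ → ℕ) (α : ℕ → ℕ → ℕ) (i j : ℕ) :
    mGenV 𝕜 v α i j = monomial (expE v α i j) 1 := by
  rw [mGenV, expE, prod_X_pow, X_pow_eq_monomial, monomial_mul, one_mul]

lemma expE_zero (v : ℕ → ℕ) (α : ℕ → ℕ → ℕ) (j : ℕ) :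
    expE v α 0 j = Finsupp.single (v j) (α 0 j) := by
  simp [expE]


lemma expE_shift (α α' : ℕ → ℕ → ℕ)
    (hα' : ∀ i j, α' i j =
      if i = 0 then α 0 (j + 1) - α 1 (j + 1) else α (i + 1) (j + 1))
    {i j : ℕ} (hz : ∀ r, 2 ≤ r → r ≤ i → α r 1 = 0) (hi : 1 ≤ i) (hij : i < j) :
    expE id α i j = Finsupp.single 1 (α 0 1 - α 1 1) + expE (· + 1) α' (i-1) (j-1) := by
  have hj2 : j - 1 + 1 = j := by omega
  have key : ∀ t, α' 0 t - ∑ r ∈ Finset.Icc 1 (i-1), α' r t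
      = α 0 (t+1) - ∑ r ∈ Finset.Icc 1 i, α r (t+1) := by
    intro t
    have h1 : ∑ r ∈ Finset.Icc 1 (i-1), α' r t = ∑ r ∈ Finset.Icc 2 i, α r (t+1) := by
      rw [show Finset.Icc 2 i = Finset.Icc (1+1) ((i-1)+1) from by congr 1; omega,
        sum_shift]
      exact Finset.sum_congr rfl fun r hr => by
        rw [Finset.mem_Icc] at hr; rw [hα', if_neg (by omega)]
    rw [hα' 0 t, if_pos rfl, h1, tsub_tsub, sum_Icc_one (fun r => α r (t+1)) hi]
  have hS1 : ∑ r ∈ Finset.Icc 1 i, α r 1 = α 1 1 := by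
    rw [sum_Icc_one (fun r => α r 1) hi]
    have h0 : ∑ r ∈ Finset.Icc 2 i, α r 1 = 0 := Finset.sum_eq_zero fun r hr => by
      rw [Finset.mem_Icc] at hr; exact hz r hr.1 hr.2
    omega
  rw [expE, expE]
  simp only [id_eq]
  rw [sum_Icc_one (fun t => Finsupp.single t (α 0 t - ∑ r ∈ Finset.Icc 1 i, α r t)) hi, hS1,
    show Finset.Icc 2 i = Finset.Icc (1+1) ((i-1)+1) from by congr 1; omega,
    sum_shift (fun t => Finsupp.single t (α 0 t - ∑ r ∈ Finset.Icc 1 i, α r t)),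
    add_assoc]
  congr 1
  congr 1
  · exact Finset.sum_congr rfl fun t _ => by rw [key t]
  · rw [key (j-1), hj2]

/-- for a single `(s,n)`-table in normal form (default variable order),
the colon ideal `J = K(T) : (x_1^{d_1 − α_{1,1}})` is generated by `x_1^{α_{1,1}}`
together with the generators of the table ideal of the `(s−1, n−1)`-table `T'`
obtained by deleting the first row and column and replacing the top row entries by
`d_j − α_{1,j}`, in the variables `x_2, …, x_n`. -/
theorem stmt13 (𝕜 : Type*) [Field 𝕜] (s n : ℕ) (α : ℕ → ℕ → ℕ) (hT : IsTable s n α)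
    (hs : 1 ≤ s) (hproper : KIdeal 𝕜 s n α ≠ ⊤) (hNF : NormalForm s n α)
    (α' : ℕ → ℕ → ℕ)
    (hα' : ∀ i j, α' i j =
      if i = 0 then α 0 (j + 1) - α 1 (j + 1) else α (i + 1) (j + 1)) :
    IsTable (s - 1) (n - 1) α' ∧
    Submodule.colon (KIdeal 𝕜 s n α)
        (Ideal.span {(X 1 : MvPolynomial ℕ 𝕜) ^ (α 0 1 - α 1 1)}) =
      Ideal.span (insert ((X 1 : MvPolynomial ℕ 𝕜) ^ α 1 1)
        {m | ∃ i j, i ≤ s - 1 ∧ i < j ∧ j ≤ n - 1 ∧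
          m = mGenV 𝕜 (· + 1) α' i j}) := by
  obtain ⟨hsn, hzero, hcol, hrow⟩ := hT
  obtain ⟨hdiag, hnzcol, hscol⟩ := hNF
  have hTab : IsTable (s - 1) (n - 1) α' := by
    refine ⟨by omega, ?_, ?_, ?_⟩
    · intro i j h1 h2 h3
      rw [hα', if_neg (by omega)]
      exact hzero (i+1) (j+1) (by omega) (by omega) (by omega)
    · intro j h1 h2
      have hsum : ∑ i ∈ Finset.Icc 1 (s-1), α' i j = ∑ i ∈ Finset.Icc 2 s, α i (j+1) := by
        rw [show Finset.Icc 2 s = Finset.Icc (1+1) ((s-1)+1) from by congr 1; omega, sum_shift]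
        exact Finset.sum_congr rfl fun r hr => by
          rw [Finset.mem_Icc] at hr; rw [hα', if_neg (by omega)]
      have h := hcol (j+1) (by omega) (by omega)
      rw [sum_Icc_one (fun i => α i (j+1)) hs] at h
      rw [hsum, hα', if_pos rfl]
      omega
    · intro k h1 h2
      have h := hrow (k+1) (by omega) (by omega)
      rw [show k+1-1 = k from by omega,
        sum_Icc_one (fun i => α i (k+1)) (by omega : 1 ≤ k)] at h
      have e1 : ∑ i ∈ Finset.Icc 1 (k-1), α' i k = ∑ i ∈ Finset.Icc 2 k, α i (k+1) := by
        rw [show Finset.Icc 2 k = Finset.Icc (1+1) ((k-1)+1) from by congr 1; omega, sum_shift]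
        exact Finset.sum_congr rfl fun r hr => by
          rw [Finset.mem_Icc] at hr; rw [hα', if_neg (by omega)]
      have e2 : ∑ j ∈ Finset.Icc (k+1) (n-1), α' k j = ∑ j ∈ Finset.Icc (k+1+1) n, α (k+1) j := by
        rw [show Finset.Icc (k+1+1) n = Finset.Icc ((k+1)+1) ((n-1)+1) from by congr 1; omega,
          sum_shift]
        exact Finset.sum_congr rfl fun r _ => by rw [hα', if_neg (by omega)]
      have e3 : (if k+1 ≤ s - 1 then α' (k+1) (k+1) else 0)
          = (if k+1+1 ≤ s then α (k+1+1) (k+1+1) else 0) := by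
        by_cases hc : k+1 ≤ s - 1
        · rw [if_pos hc, if_pos (by omega : k+1+1 ≤ s), hα', if_neg (by omega)]
        · rw [if_neg hc, if_neg (by omega : ¬ (k+1+1 ≤ s))]
      rw [hα', if_pos rfl, e1, e2, e3]
      omega
  refine ⟨hTab, ?_⟩
  set c := α 0 1 - α 1 1 with hc
  set u : ℕ →₀ ℕ := Finsupp.single 1 c with hu
  have ha11 : α 1 1 ≤ α 0 1 := by
    have h := hscol 1 le_rfl (by omega)
    have h2 : α 1 1 ≤ ∑ i ∈ Finset.Icc 1 s, α i 1 :=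
      Finset.single_le_sum (f := fun i => α i 1) (fun i _ => Nat.zero_le _)
        (Finset.mem_Icc.mpr ⟨le_rfl, hs⟩)
    omega
  -- generator exponent sets
  have hK : {m | ∃ i j, i ≤ s ∧ i < j ∧ j ≤ n ∧ m = mGen 𝕜 α i j}
      = (fun e => monomial e (1 : 𝕜)) ''
        {e | ∃ i j, i ≤ s ∧ i < j ∧ j ≤ n ∧ e = expE id α i j} := by
    ext m
    simp only [Set.mem_setOf_eq, Set.mem_image]
    constructor
    · rintro ⟨i, j, h1, h2, h3, rfl⟩
      exact ⟨expE id α i j, ⟨i, j, h1, h2, h3, rfl⟩, by rw [mGen, mGenV_eq]⟩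
    · rintro ⟨e, ⟨i, j, h1, h2, h3, rfl⟩, rfl⟩
      exact ⟨i, j, h1, h2, h3, by rw [mGen, mGenV_eq]⟩
  have hR : (insert ((X 1 : MvPolynomial ℕ 𝕜) ^ α 1 1)
        {m | ∃ i j, i ≤ s - 1 ∧ i < j ∧ j ≤ n - 1 ∧ m = mGenV 𝕜 (· + 1) α' i j})
      = (fun e => monomial e (1 : 𝕜)) ''
        (insert (Finsupp.single 1 (α 1 1))
          {e | ∃ i j, i ≤ s - 1 ∧ i < j ∧ j ≤ n - 1 ∧ e = expE (· + 1) α' i j}) := by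
    rw [Set.image_insert_eq]
    congr 1
    · exact X_pow_eq_monomial
    · ext m
      simp only [Set.mem_setOf_eq, Set.mem_image]
      constructor
      · rintro ⟨i, j, h1, h2, h3, rfl⟩
        exact ⟨expE (· + 1) α' i j, ⟨i, j, h1, h2, h3, rfl⟩, by rw [mGenV_eq]⟩
      · rintro ⟨e, ⟨i, j, h1, h2, h3, rfl⟩, rfl⟩
        exact ⟨i, j, h1, h2, h3, by rw [mGenV_eq]⟩
  have hmain : ∀ m : ℕ →₀ ℕ,
      (∃ e ∈ {e | ∃ i j, i ≤ s ∧ i < j ∧ j ≤ n ∧ e = expE id α i j}, e ≤ m + u) ↔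
      (∃ e' ∈ insert (Finsupp.single 1 (α 1 1))
          {e | ∃ i j, i ≤ s - 1 ∧ i < j ∧ j ≤ n - 1 ∧ e = expE (· + 1) α' i j}, e' ≤ m) := by
    intro m
    constructor
    · rintro ⟨e, ⟨i, j, h1, h2, h3, rfl⟩, hle⟩
      rcases Nat.eq_zero_or_pos i with hi0 | hi1
      · subst hi0
        rw [expE_zero] at hle
        simp only [id_eq] at hle
        rcases eq_or_ne j 1 with rfl | hj1
        · refine ⟨Finsupp.single 1 (α 1 1), Set.mem_insert _ _, ?_⟩
          rw [Finsupp.single_le_iff] at hle ⊢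
          have hval : (m + u) 1 = m 1 + c := by simp [hu]
          rw [hval] at hle
          omega
        · refine ⟨expE (· + 1) α' 0 (j - 1),
            Set.mem_insert_of_mem _ ⟨0, j - 1, by omega, by omega, by omega, rfl⟩, ?_⟩
          have hj : j - 1 + 1 = j := by omega
          simp only [expE_zero]
          rw [hj, hα' 0 (j - 1), if_pos rfl, hj, Finsupp.single_le_iff]
          rw [Finsupp.single_le_iff] at hle
          have hval : (m + u) j = m j := by
            rw [Finsupp.add_apply, hu, Finsupp.single_eq_of_ne' (by omega : (1:ℕ) ≠ j), add_zero]
          rw [hval] at hle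
          omega
      · rw [expE_shift α α' hα'
          (fun r hr2 hri => hzero r 1 (by omega) (by omega) (by omega)) hi1 h2] at hle
        refine ⟨expE (· + 1) α' (i - 1) (j - 1),
          Set.mem_insert_of_mem _ ⟨i - 1, j - 1, by omega, by omega, by omega, rfl⟩, ?_⟩
        rw [Finsupp.le_def] at hle ⊢
        intro a
        have h := hle a
        have hbr : (Finsupp.single 1 (α 0 1 - α 1 1) : ℕ →₀ ℕ) a = u a := rfl
        simp only [Finsupp.add_apply] at h ⊢
        omega
    · rintro ⟨e', he', hle⟩
      rw [Set.mem_insert_iff] at he'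
      rcases he' with rfl | ⟨i, j, h1, h2, h3, rfl⟩
      · refine ⟨expE id α 0 1, ⟨0, 1, by omega, by omega, by omega, rfl⟩, ?_⟩
        rw [expE_zero]
        simp only [id_eq]
        rw [Finsupp.single_le_iff] at hle ⊢
        have hval : (m + u) 1 = m 1 + c := by simp [hu]
        rw [hval]
        omega
      · refine ⟨expE id α (i + 1) (j + 1), ⟨i + 1, j + 1, by omega, by omega, by omega, rfl⟩, ?_⟩
        rw [expE_shift α α'
          (fun i j => hα' i j)
          (fun r hr2 hri => hzero r 1 (by omega) (by omega) (by omega)) (by omega) (by omega)]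
        simp only [Nat.add_sub_cancel]
        rw [Finsupp.le_def] at hle ⊢
        intro a
        have h := hle a
        have hbr : (Finsupp.single 1 (α 0 1 - α 1 1) : ℕ →₀ ℕ) a = u a := rfl
        simp only [Finsupp.add_apply]
        omega
  ext p
  rw [Ideal.mem_colon_span_singleton, KIdeal, hK, hR, mem_ideal_span_monomial_image,
    mem_ideal_span_monomial_image]
  have hsupp : (p * (X 1 : MvPolynomial ℕ 𝕜) ^ c).support = p.support.map (addRightEmbedding u) := by
    rw [X_pow_eq_monomial, ← single_eq_monomial]
    exact AddMonoidAlgebra.support_coeff_mul_single p 1 (by simp) u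
  rw [hsupp]
  have hiff : (∀ m ∈ p.support.map (addRightEmbedding u),
      ∃ e ∈ {e | ∃ i j, i ≤ s ∧ i < j ∧ j ≤ n ∧ e = expE id α i j}, e ≤ m)
      ↔ ∀ m ∈ p.support,
      ∃ e ∈ {e | ∃ i j, i ≤ s ∧ i < j ∧ j ≤ n ∧ e = expE id α i j}, e ≤ m + u := by
    constructor
    · intro h m hm
      have := h _ (Finset.mem_map_of_mem _ hm)
      rwa [addRightEmbedding_apply] at this
    · intro h m hm
      rw [Finset.mem_map] at hm
      obtain ⟨m', hm', rfl⟩ := hm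
      rw [addRightEmbedding_apply]
      exact h m' hm'
  rw [hiff]
  constructor
  · intro h m hm
    exact (hmain m).1 (h m hm)
  · intro h m hm
    exact (hmain m).2 (h m hm)
end

section
/- Let T be an (s,n)-table with s ≥ 1 whose last unconstrained column n is singular, i.e., d_n = ∑_{i=1}^{s} α_{i,n}. Let T' be the (s−1, n)-matrix obtained from T by deleting the last row and, if s > 1, replacing α_{s−1,s} by α_{s−1,s} + α_{s,s} (if s = 1, replacing d_1 by d_1 − α_{1,1} — but consider only s > 1 here). Then T' is again an (s−1, n)-table and K(T') = K(T). -/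
open MvPolynomial Finset

section Aux

variable {K : Type*} [Field K]

lemma mGen_eq (α : ℕ → ℕ → ℕ) (i j : ℕ) :
    mGen K α i j =
      (∏ t ∈ Finset.Icc 1 i, X t ^ (α 0 t - ∑ r ∈ Finset.Icc 1 i, α r t)) *
        X j ^ (α 0 j - ∑ r ∈ Finset.Icc 1 i, α r j) := rfl

lemma mGen_congr (β γ : ℕ → ℕ → ℕ) (i j : ℕ)
    (h : ∀ r t, r ≤ i → (t ≤ i ∨ t = j) → β r t = γ r t) :
    mGen K β i j = mGen K γ i j := by
  rw [mGen_eq, mGen_eq]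
  congr 1
  · refine Finset.prod_congr rfl fun t ht => ?_
    simp only [Finset.mem_Icc] at ht
    rw [h 0 t (Nat.zero_le _) (Or.inl ht.2),
      Finset.sum_congr rfl fun r hr => by
        simp only [Finset.mem_Icc] at hr; exact h r t hr.2 (Or.inl ht.2)]
  · rw [h 0 j (Nat.zero_le _) (Or.inr rfl),
      Finset.sum_congr rfl fun r hr => by
        simp only [Finset.mem_Icc] at hr; exact h r j hr.2 (Or.inr rfl)]

end Aux

/-- removing a singularity in the unconstrained column `n` (for `s > 1`):
deleting the last row and adding `α_{s,s}` to `α_{s−1,s}` yields an `(s−1,n)`-table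
with the same associated ideal. -/
theorem stmt17 (𝕜 : Type*) [Field 𝕜] (s n : ℕ) (α : ℕ → ℕ → ℕ) (hT : IsTable s n α)
    (hs : 2 ≤ s) (hsing : ∑ i ∈ Finset.Icc 1 s, α i n = α 0 n)
    (α' : ℕ → ℕ → ℕ)
    (hα' : ∀ i j, α' i j =
      if i = s - 1 ∧ j = s then α (s - 1) s + α s s else α i j) :
    IsTable (s - 1) n α' ∧ KIdeal 𝕜 (s - 1) n α' = KIdeal 𝕜 s n α := by
  obtain ⟨u, rfl⟩ : ∃ u, s = u + 2 := ⟨s - 2, by omega⟩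
  obtain ⟨hsn, hzero, hcol, hrow⟩ := hT
  have hs1 : u + 2 - 1 = u + 1 := rfl
  rw [hs1] at hα'
  -- basic facts about α'
  have hne : ∀ r t, ¬(r = u + 1 ∧ t = u + 2) → α' r t = α r t := by
    intro r t h; rw [hα' r t, if_neg h]
  have hlast : α' (u + 1) (u + 2) = α (u + 1) (u + 2) + α (u + 2) (u + 2) := by
    rw [hα', if_pos ⟨rfl, rfl⟩]
  -- splitting column sums at the top row
  have hsumsplit : ∀ t, ∑ r ∈ Finset.Icc 1 (u + 2), α r t =
      ∑ r ∈ Finset.Icc 1 (u + 1), α r t + α (u + 2) t := by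
    intro t; rw [Finset.sum_Icc_succ_top (by omega)]
  have hsumlow : ∀ t, t ≤ u + 1 →
      ∑ r ∈ Finset.Icc 1 (u + 2), α r t = ∑ r ∈ Finset.Icc 1 (u + 1), α r t := by
    intro t ht
    rw [hsumsplit, hzero (u + 2) t (by omega) le_rfl (by omega), add_zero]
  have hsum' : ∀ t, t ≠ u + 2 →
      ∑ r ∈ Finset.Icc 1 (u + 1), α' r t = ∑ r ∈ Finset.Icc 1 (u + 1), α r t := by
    intro t ht
    refine Finset.sum_congr rfl fun r hr => hne r t (by rintro ⟨-, rfl⟩; exact ht rfl)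
  have hsumtop : ∑ r ∈ Finset.Icc 1 (u + 1), α' r (u + 2) =
      ∑ r ∈ Finset.Icc 1 (u + 2), α r (u + 2) := by
    rw [hsumsplit, Finset.sum_Icc_succ_top (a := 1) (b := u) (by omega),
      Finset.sum_Icc_succ_top (a := 1) (b := u) (by omega), hlast]
    rw [Finset.sum_congr rfl fun r hr => hne r (u + 2)
      (by simp only [Finset.mem_Icc] at hr; rintro ⟨rfl, -⟩; omega)]
    ring
  constructor
  · -- IsTable (u+1) n α'
    refine ⟨by omega, ?_, ?_, ?_⟩
    · intro i j h1 h2 h3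
      rw [hne i j (by rintro ⟨rfl, rfl⟩; omega)]
      exact hzero i j h1 (by omega) h3
    · intro j h1 h2
      have h0 : α' 0 j = α 0 j := hne 0 j (by rintro ⟨h, -⟩; omega)
      rw [hs1, h0]
      by_cases hj : j = u + 2
      · subst hj; rw [hsumtop]; exact hcol _ h1 h2
      · rw [hsum' j hj]
        calc ∑ r ∈ Finset.Icc 1 (u + 1), α r j
            ≤ ∑ r ∈ Finset.Icc 1 (u + 2), α r j := by
              rw [hsumsplit]; exact Nat.le_add_right _ _
          _ ≤ α 0 j := hcol j h1 h2
    · intro k h1 h2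
      rw [hs1] at h2 ⊢
      have h0 : α' 0 k = α 0 k := hne 0 k (by rintro ⟨h, -⟩; omega)
      rw [h0]
      have hrk := hrow k h1 (by omega)
      by_cases hk : k = u + 1
      · subst hk
        rw [if_neg (show ¬(u + 1 + 1 ≤ u + 1) by omega)]
        rw [if_pos (show u + 1 + 1 ≤ u + 2 by omega)] at hrk
        rw [Finset.sum_congr rfl fun i hi => hne i (u + 1)
            (by simp only [Finset.mem_Icc] at hi; rintro ⟨-, h⟩; omega)]
        have hrowsum : ∑ j ∈ Finset.Icc (u + 2) n, α' (u + 1) j =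
            ∑ j ∈ Finset.Icc (u + 2) n, α (u + 1) j + α (u + 2) (u + 2) := by
          have : ∀ j, α' (u + 1) j = α (u + 1) j + (if j = u + 2 then α (u + 2) (u + 2) else 0) := by
            intro j
            by_cases hj : j = u + 2
            · subst hj; rw [hlast, if_pos rfl]
            · rw [hne _ _ (by rintro ⟨-, h⟩; exact hj h), if_neg hj, add_zero]
          rw [Finset.sum_congr rfl fun j _ => this j, Finset.sum_add_distrib,
            Finset.sum_ite_eq' (Finset.Icc (u + 2) n) (u + 2) (fun _ => α (u + 2) (u + 2)),
            if_pos (by simp only [Finset.mem_Icc]; omega)]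
        rw [hrowsum, hrk]; ring
      · rw [if_pos (show k + 1 ≤ u + 1 by omega)]
        rw [if_pos (show k + 1 ≤ u + 2 by omega)] at hrk
        rw [Finset.sum_congr rfl fun i hi => hne i k
            (by simp only [Finset.mem_Icc] at hi; rintro ⟨rfl, -⟩; omega),
          Finset.sum_congr rfl fun j _ => hne k j (by rintro ⟨rfl, -⟩; omega),
          hne (k + 1) (k + 1) (by rintro ⟨-, h⟩; omega)]
        exact hrk
  · -- ideal equality
    rw [hs1]
    -- generators agree away from (u+1, u+2)
    have h1 : ∀ i j, i ≤ u + 1 → ¬(i = u + 1 ∧ j = u + 2) →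
        mGen 𝕜 α' i j = mGen 𝕜 α i j := by
      intro i j hi hij
      refine mGen_congr α' α i j fun r t hr ht => hne r t ?_
      rintro ⟨rfl, rfl⟩
      rcases ht with ht | ht
      · omega
      · exact hij ⟨by omega, ht.symm⟩
    -- the full prefix of row u+2 equals the special generator
    have hP : (∏ t ∈ Finset.Icc 1 (u + 2), X (R := 𝕜) t ^
          (α 0 t - ∑ r ∈ Finset.Icc 1 (u + 2), α r t)) =
        mGen 𝕜 α' (u + 1) (u + 2) := by
      rw [mGen_eq, Finset.prod_Icc_succ_top (a := 1) (b := u + 1) (by omega)]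
      congr 1
      · refine Finset.prod_congr rfl fun t ht => ?_
        simp only [Finset.mem_Icc] at ht
        rw [hsumlow t ht.2, hne 0 t (by rintro ⟨h, -⟩; omega), hsum' t (by omega)]
      · rw [hne 0 (u + 2) (by rintro ⟨h, -⟩; omega), hsumtop]
    -- row-(u+2) generators factor through the special generator
    have h3 : ∀ j, mGen 𝕜 α (u + 2) j =
        mGen 𝕜 α' (u + 1) (u + 2) *
          X j ^ (α 0 j - ∑ r ∈ Finset.Icc 1 (u + 2), α r j) := by
      intro j; rw [mGen_eq, hP]
    -- the special generator is m_{s,n}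
    have h2 : mGen 𝕜 α' (u + 1) (u + 2) = mGen 𝕜 α (u + 2) n := by
      rw [h3 n, hsing, Nat.sub_self, pow_zero, mul_one]
    -- m_{s-1,s} is a multiple of the special generator
    have h4 : mGen 𝕜 α (u + 1) (u + 2) =
        mGen 𝕜 α' (u + 1) (u + 2) * X (u + 2) ^ (α (u + 2) (u + 2)) := by
      rw [mGen_eq, mGen_eq]
      rw [mul_assoc, ← pow_add]
      refine congr_arg₂ HMul.hMul ?_ ?_
      · refine Finset.prod_congr rfl fun t ht => ?_
        simp only [Finset.mem_Icc] at ht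
        rw [hne 0 t (by rintro ⟨h, -⟩; omega), hsum' t (by omega)]
      · rw [hne 0 (u + 2) (by rintro ⟨h, -⟩; omega), hsumtop]
        congr 1
        have hc := hcol (u + 2) (by omega) (by omega)
        rw [hsumsplit] at hc ⊢
        omega
    refine le_antisymm (Ideal.span_le.2 ?_) (Ideal.span_le.2 ?_)
    · rintro x ⟨i, j, hi, hij, hjn, rfl⟩
      by_cases hc : i = u + 1 ∧ j = u + 2
      · obtain ⟨rfl, rfl⟩ := hc
        rw [h2]
        exact Ideal.subset_span ⟨u + 2, n, le_rfl, by omega, le_rfl, rfl⟩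
      · rw [h1 i j hi hc]
        exact Ideal.subset_span ⟨i, j, by omega, hij, hjn, rfl⟩
    · rintro x ⟨i, j, hi, hij, hjn, rfl⟩
      by_cases hi2 : i = u + 2
      · subst hi2
        rw [h3 j]
        exact Ideal.mul_mem_right _ _
          (Ideal.subset_span ⟨u + 1, u + 2, le_rfl, by omega, by omega, rfl⟩)
      · by_cases hc : i = u + 1 ∧ j = u + 2
        · obtain ⟨rfl, rfl⟩ := hc
          rw [h4]
          exact Ideal.mul_mem_right _ _
            (Ideal.subset_span ⟨u + 1, u + 2, le_rfl, by omega, by omega, rfl⟩)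
        · rw [← h1 i j (by omega) hc]
          exact Ideal.subset_span ⟨i, j, by omega, hij, hjn, rfl⟩
end

section
/- Let T be an (s,n)-table whose last column n is an unconstrained zero column, i.e., α_{1,n} = ⋯ = α_{s,n} = 0. Let T' be the (s, n−1)-table obtained by deleting column n. Then T' is again a table, and K(T) equals K(T') + (x_n^{d_n}) in k[x_1,...,x_n]; i.e., T reduces to the disjoint union of T' and the singleton table (d_n) without changing the associated ideal. -/
open MvPolynomial Finset

/-- removing an unconstrained zero column: if `α_{1,n} = ⋯ = α_{s,n} = 0`,
then deleting column `n` yields an `(s, n−1)`-table `T'` and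
`K(T) = K(T') + (x_n^{d_n})`. -/
theorem stmt18 (𝕜 : Type*) [Field 𝕜] (s n : ℕ) (α : ℕ → ℕ → ℕ) (hT : IsTable s n α)
    (hn : s + 1 < n) (hz : ∀ i, 1 ≤ i → i ≤ s → α i n = 0) :
    IsTable s (n - 1) α ∧
    KIdeal 𝕜 s n α = KIdeal 𝕜 s (n - 1) α ⊔
      Ideal.span {(X n : MvPolynomial ℕ 𝕜) ^ α 0 n} := by

  obtain ⟨hsn, hzero, hcol, hrow⟩ := hT
  constructor
  · refine ⟨by omega, hzero, fun j h1 h2 => hcol j h1 (by omega), fun k hk1 hk2 => ?_⟩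
    have h1 := hrow k hk1 hk2
    have hsplit : Finset.Icc (k+1) n = insert n (Finset.Icc (k+1) (n-1)) := by
      ext x; simp [Finset.mem_insert]; omega
    rw [h1, hsplit, Finset.sum_insert (by simp; omega), hz k hk1 hk2]
    ring
  · have hsum : ∀ i, i ≤ s → ∑ r ∈ Finset.Icc 1 i, α r n = 0 := fun i hi =>
      Finset.sum_eq_zero fun r hr => by
        have := Finset.mem_Icc.mp hr
        exact hz r this.1 (le_trans this.2 hi)
    have hmn : ∀ i, i ≤ s → mGen 𝕜 α i n =
        (∏ t ∈ Finset.Icc 1 i, (X t : MvPolynomial ℕ 𝕜) ^ (α 0 t - ∑ r ∈ Finset.Icc 1 i, α r t)) *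
          X n ^ α 0 n := by
      intro i hi
      unfold mGen mGenV
      rw [hsum i hi]
      simp
    apply le_antisymm
    · rw [KIdeal, Ideal.span_le]
      rintro m ⟨i, j, his, hij, hjn, rfl⟩
      rcases eq_or_lt_of_le hjn with rfl | hlt
      · apply Ideal.mem_sup_right
        rw [hmn i his]
        exact Ideal.mul_mem_left _ _ (Ideal.subset_span rfl)
      · exact Ideal.mem_sup_left (Ideal.subset_span ⟨i, j, his, hij, by omega, rfl⟩)
    · apply sup_le
      · rw [KIdeal, Ideal.span_le]
        rintro m ⟨i, j, his, hij, hjn, rfl⟩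
        exact Ideal.subset_span ⟨i, j, his, hij, by omega, rfl⟩
      · rw [Ideal.span_le]
        rintro m hm
        rw [Set.mem_singleton_iff] at hm
        subst hm
        have hx : (X n : MvPolynomial ℕ 𝕜) ^ α 0 n = mGen 𝕜 α 0 n := by
          unfold mGen mGenV; simp
        rw [hx]
        exact Ideal.subset_span ⟨0, n, by omega, by omega, le_rfl, rfl⟩
end

section
/- Let T be an (s,n)-table and suppose α_{i,i} = 0 for some 1 ≤ i ≤ s. Let T' be the matrix obtained from T by deleting rows i, i+1, ..., s (keeping rows 0 through i−1). Then T' is an (i−1, n)-table and K(T') = K(T). -/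
open MvPolynomial Finset

/-- cutting at `α_{i,i} = 0`: if `1 ≤ i ≤ s` and `α_{i,i} = 0`, then
keeping only rows `0, …, i−1` yields an `(i−1, n)`-table with the same ideal. -/
theorem stmt19 (𝕜 : Type*) [Field 𝕜] (s n : ℕ) (α : ℕ → ℕ → ℕ) (hT : IsTable s n α)
    (i : ℕ) (hi1 : 1 ≤ i) (his : i ≤ s) (hz : α i i = 0) :
    IsTable (i - 1) n α ∧ KIdeal 𝕜 (i - 1) n α = KIdeal 𝕜 s n α := by

  obtain ⟨hsn, hrows, hcol, hax⟩ := hT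
  -- entries below the diagonal vanish, hence partial column sums stabilize
  have stab : ∀ t, t ≤ i → ∀ k, i - 1 ≤ k → k ≤ s →
      ∑ r ∈ Finset.Icc 1 k, α r t = ∑ r ∈ Finset.Icc 1 (i - 1), α r t := by
    intro t ht k hk1 hk2
    refine (Finset.sum_subset (Finset.Icc_subset_Icc_right hk1) ?_).symm
    intro r hr hr'
    simp only [Finset.mem_Icc] at hr hr'
    have hri : i ≤ r := by omega
    rcases eq_or_lt_of_le (le_trans ht hri) with h | h
    · -- r = i = t
      have : r = i := by omega
      have : t = i := by omega
      simp_all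
    · exact hrows r t (by omega) (by omega) h
  constructor
  · refine ⟨by omega, ?_, ?_, ?_⟩
    · intro a b ha hb hba; exact hrows a b ha (by omega) hba
    · intro j hj1 hjn
      calc ∑ r ∈ Finset.Icc 1 (i - 1), α r j
          ≤ ∑ r ∈ Finset.Icc 1 s, α r j :=
            Finset.sum_le_sum_of_subset (Finset.Icc_subset_Icc_right (by omega))
        _ ≤ α 0 j := hcol j hj1 hjn
    · intro k hk1 hki
      have h := hax k hk1 (by omega)
      rw [if_pos (by omega : k + 1 ≤ s)] at h
      by_cases hcase : k + 1 ≤ i - 1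
      · rw [if_pos hcase]; exact h
      · rw [if_neg hcase]
        have hk : k + 1 = i := by omega
        have h2 : α (k + 1) (k + 1) = 0 := by rw [hk]; exact hz
        rw [h2] at h
        exact h
  · apply le_antisymm
    · refine Ideal.span_le.mpr ?_
      rintro m ⟨a, b, has, hab, hbn, rfl⟩
      exact Ideal.subset_span ⟨a, b, by omega, hab, hbn, rfl⟩
    · refine Ideal.span_le.mpr ?_
      rintro m ⟨a, b, has, hab, hbn, rfl⟩
      by_cases hcase : a ≤ i - 1
      · exact Ideal.subset_span ⟨a, b, hcase, hab, hbn, rfl⟩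
      · have hia : i ≤ a := by omega
        have hIcc : ∀ c : ℕ, Finset.Icc 1 c = Finset.Ioc 0 c := by
          intro c; rw [← Finset.Icc_add_one_left_eq_Ioc]; rfl
        have hsplitgen : ∀ (f : ℕ → MvPolynomial ℕ 𝕜) (c : ℕ), i ≤ c →
            (∏ t ∈ Finset.Icc 1 c, f t) =
              ((∏ t ∈ Finset.Icc 1 (i - 1), f t) * f i) * ∏ t ∈ Finset.Ioc i c, f t := by
          intro f c hc
          rw [hIcc c, hIcc (i - 1),
            ← Finset.prod_Ioc_consecutive f (Nat.zero_le i) hc]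
          congr 1
          have hi' : i = (i - 1) + 1 := by omega
          rw [hi', Finset.prod_Ioc_succ_top (Nat.zero_le _), ← hi']
        have key : mGen 𝕜 α a b = mGen 𝕜 α (i - 1) i *
            ((∏ t ∈ Finset.Ioc i a, X t ^ (α 0 t - ∑ r ∈ Finset.Icc 1 a, α r t)) *
              X b ^ (α 0 b - ∑ r ∈ Finset.Icc 1 a, α r b)) := by
          simp only [mGen, mGenV, id]
          rw [hsplitgen (fun t => X t ^ (α 0 t - ∑ r ∈ Finset.Icc 1 a, α r t)) a hia]
          have e1 : (∏ t ∈ Finset.Icc 1 (i - 1), X (σ := ℕ) (R := 𝕜) t ^ (α 0 t - ∑ r ∈ Finset.Icc 1 a, α r t)) =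
              ∏ t ∈ Finset.Icc 1 (i - 1), X t ^ (α 0 t - ∑ r ∈ Finset.Icc 1 (i - 1), α r t) := by
            refine Finset.prod_congr rfl fun t ht => ?_
            simp only [Finset.mem_Icc] at ht
            rw [stab t (by omega) a (by omega) (by omega)]
          have e2 : ∑ r ∈ Finset.Icc 1 a, α r i = ∑ r ∈ Finset.Icc 1 (i - 1), α r i :=
            stab i le_rfl a (by omega) (by omega)
          rw [e1, e2]
          ring
        rw [key]
        exact Ideal.mul_mem_right _ _
          (Ideal.subset_span ⟨i - 1, i, le_rfl, by omega, by omega, rfl⟩)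
end
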